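/- arXiv:2604.11375 — 2 statements merged into one kernel-verified Lean document; each statement's English description precedes it below -/
import Mathlib

section
/- Let E be a real Hilbert space, let L > 0, and let f : E → ℝ be differentiable with L-Lipschitz gradient and bounded below. Let (x_k) be the gradient descent sequence x_{k+1} = x_k − (1/L)·∇f(x_k) from any initial point x₀. Then the gradient norms vanish asymptotically: ‖∇f(x_k)‖ → 0 as k → ∞. -/
open Filter Real

local notation "⟪" a ", " b "⟫" => inner (𝕜 := ℝ) a b

/-- The descent lemma for `L`-smooth functions. -/
lemma descent_lemma {E : Type*} [NormedAddCommGroup E] [InnerProductSpace ℝ E]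
    [CompleteSpace E]
    (L : ℝ) (f : E → ℝ) (hf : Differentiable ℝ f)
    (hlip : ∀ x y : E, ‖gradient f x - gradient f y‖ ≤ L * ‖x - y‖)
    (x v : E) :
    f (x + v) ≤ f x + ⟪gradient f x, v⟫ + L / 2 * ‖v‖ ^ 2 := by
  set g : ℝ → E := fun t => x + t • v with hg
  have hgd : ∀ t : ℝ, HasDerivAt g v t := fun t =>
    (((hasDerivAt_id t).smul_const v).const_add x).congr_deriv (one_smul ℝ v)
  have hφ : ∀ t : ℝ, HasDerivAt (fun s => f (g s)) ⟪gradient f (g t), v⟫ t := by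
    intro t
    have h1 := ((hf (g t)).hasGradientAt.hasFDerivAt).comp_hasDerivAt t (hgd t)
    simpa [Function.comp_def] using h1
  set h : ℝ → ℝ := fun t =>
    f (g t) - (f x + t * ⟪gradient f x, v⟫ + L / 2 * ‖v‖ ^ 2 * t ^ 2) with hh
  have hhd : ∀ t : ℝ, HasDerivAt h
      (⟪gradient f (g t), v⟫ -
        (⟪gradient f x, v⟫ + L / 2 * ‖v‖ ^ 2 * (2 * t))) t := by
    intro t
    apply (hφ t).sub
    have h2 : HasDerivAt (fun s : ℝ => s * ⟪gradient f x, v⟫) ⟪gradient f x, v⟫ t := by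
      simpa using (hasDerivAt_id t).mul_const ⟪gradient f x, v⟫
    have h3 : HasDerivAt (fun s : ℝ => L / 2 * ‖v‖ ^ 2 * s ^ 2)
        (L / 2 * ‖v‖ ^ 2 * (2 * t)) t := by
      have h4 := (hasDerivAt_pow 2 t).const_mul (L / 2 * ‖v‖ ^ 2)
      norm_num at h4
      convert h4 using 1
    simpa [Pi.add_def] using (h2.const_add (f x)).add h3
  have hanti : AntitoneOn h (Set.Icc (0:ℝ) 1) := by
    apply antitoneOn_of_deriv_nonpos (convex_Icc 0 1)
    · exact (Continuous.continuousOn (by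
        have : Continuous h := by
          apply Continuous.sub
          · exact hf.continuous.comp (by continuity)
          · continuity
        exact this))
    · intro t ht
      exact (hhd t).differentiableAt.differentiableWithinAt
    · intro t ht
      rw [interior_Icc] at ht
      rw [(hhd t).deriv]
      have key : ⟪gradient f (g t), v⟫ - ⟪gradient f x, v⟫
          = ⟪gradient f (g t) - gradient f x, v⟫ := (inner_sub_left _ _ _).symm
      have hcs : ⟪gradient f (g t) - gradient f x, v⟫ ≤
          ‖gradient f (g t) - gradient f x‖ * ‖v‖ := real_inner_le_norm _ _
      have hlipb : ‖gradient f (g t) - gradient f x‖ ≤ L * (t * ‖v‖) := by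
        have := hlip (g t) x
        simpa [hg, norm_smul, abs_of_pos ht.1] using this
      have hv : (0:ℝ) ≤ ‖v‖ := norm_nonneg v
      nlinarith [ht.1.le, hcs, hlipb]
  have h10 : h 1 ≤ h 0 := hanti (by norm_num) (by norm_num) zero_le_one
  simp only [hh, hg] at h10
  simp only [zero_smul, add_zero, one_smul] at h10
  nlinarith [h10]

/-- Gradient norms vanish asymptotically along gradient descent with step size
`1/L` on an `L`-smooth function that is bounded below. -/
theorem gradient_descent_grad_norm_tendsto_zero
    {E : Type*} [NormedAddCommGroup E] [InnerProductSpace ℝ E] [CompleteSpace E]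
    (L : ℝ) (hL : 0 < L) (f : E → ℝ) (hf : Differentiable ℝ f)
    (hlip : ∀ x y : E, ‖gradient f x - gradient f y‖ ≤ L * ‖x - y‖)
    (hbdd : ∃ m : ℝ, ∀ x : E, m ≤ f x)
    (x : ℕ → E) (hx : ∀ k : ℕ, x (k + 1) = x k - (1 / L) • gradient f (x k)) :
    Filter.Tendsto (fun k => ‖gradient f (x k)‖) Filter.atTop (nhds 0) := by
  obtain ⟨m, hm⟩ := hbdd
  -- key descent inequality
  have key : ∀ k : ℕ, ‖gradient f (x k)‖ ^ 2 ≤ 2 * L * (f (x k) - f (x (k + 1))) := by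
    intro k
    have hd := descent_lemma L f hf hlip (x k) (-((1 / L) • gradient f (x k)))
    have hx' : x (k + 1) = x k + -((1 / L) • gradient f (x k)) := by
      rw [hx k]; abel
    rw [← hx'] at hd
    have hip : ⟪gradient f (x k), -((1 / L) • gradient f (x k))⟫
        = -(1 / L) * ‖gradient f (x k)‖ ^ 2 := by
      rw [inner_neg_right, real_inner_smul_right, real_inner_self_eq_norm_sq]
      ring
    have hnv : ‖-((1 / L) • gradient f (x k))‖ ^ 2
        = (1 / L) ^ 2 * ‖gradient f (x k)‖ ^ 2 := by
      rw [norm_neg, norm_smul]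
      simp [abs_of_pos (by positivity : (0:ℝ) < 1 / L), mul_pow]
    rw [hip, hnv] at hd
    have hL' : L ≠ 0 := hL.ne'
    have h2L : (0:ℝ) < 2 * L := by linarith
    have e : -(1 / L) * ‖gradient f (x k)‖ ^ 2
        + L / 2 * ((1 / L) ^ 2 * ‖gradient f (x k)‖ ^ 2)
        = -(‖gradient f (x k)‖ ^ 2 / (2 * L)) := by
      field_simp
      ring
    have hd2 : ‖gradient f (x k)‖ ^ 2 / (2 * L) ≤ f (x k) - f (x (k + 1)) := by
      linarith [hd, e]
    have h4 := (div_le_iff₀ h2L).mp hd2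
    linarith [h4]
  have hmono : Antitone (fun k => f (x k)) := by
    apply antitone_nat_of_succ_le
    intro k
    have := key k
    nlinarith [sq_nonneg ‖gradient f (x k)‖, hL]
  have hbd : BddBelow (Set.range fun k => f (x k)) := ⟨m, by rintro _ ⟨k, rfl⟩; exact hm _⟩
  have hconv : Tendsto (fun k => f (x k)) atTop (nhds (⨅ k, f (x k))) :=
    tendsto_atTop_ciInf hmono hbd
  have hdiff : Tendsto (fun k => f (x k) - f (x (k + 1))) atTop (nhds 0) := by
    have h2 : Tendsto (fun k => f (x (k + 1))) atTop (nhds (⨅ k, f (x k))) :=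
      hconv.comp (tendsto_add_atTop_nat 1)
    simpa using hconv.sub h2
  have hsq : Tendsto (fun k => ‖gradient f (x k)‖ ^ 2) atTop (nhds 0) := by
    have hub : Tendsto (fun k => 2 * L * (f (x k) - f (x (k + 1)))) atTop (nhds 0) := by
      simpa using hdiff.const_mul (2 * L)
    exact squeeze_zero (fun k => sq_nonneg _) key hub
  have := hsq.sqrt
  simpa [Real.sqrt_sq (norm_nonneg _)] using this
end

section
/- (Unrolled second-derivative bound along the deterministic sampling trajectory.) Let E be a real Banach space, let T ∈ ℕ, and let F_1, …, F_T : E → E be twice continuously differentiable maps such that for each t there exist ρ_t ≥ 0 and κ_t ≥ 0 with ‖DF_t(x)‖ ≤ ρ_t and ‖D²F_t(x)‖ ≤ κ_t for all x ∈ E. Let G = F_1 ∘ F_2 ∘ ⋯ ∘ F_T (with F_T applied first). Then for every x ∈ E, the second Fréchet derivative of G satisfies ‖D²G(x)‖ ≤ Σ_{t=1}^{T} (∏_{m=1}^{t−1} ρ_m) · κ_t · (∏_{s=t+1}^{T} ρ_s)², where empty products equal 1. -/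
/-- `ddimComp F T = F 1 ∘ F 2 ∘ ⋯ ∘ F T` (with `F T` applied first),
modeling `T` deterministic DDIM denoising steps from the initial latent state. -/
def ddimComp {E : Type*} (F : ℕ → E → E) : ℕ → E → E
  | 0 => id
  | (n + 1) => fun x => ddimComp F n (F (n + 1) x)

open ContinuousLinearMap

lemma norm_snd_deriv {E : Type*} [NormedAddCommGroup E] [NormedSpace ℝ E]
    (f : E → E) (x : E) :
    ‖iteratedFDeriv ℝ 2 f x‖ = ‖fderiv ℝ (fderiv ℝ f) x‖ := by
  rw [← norm_iteratedFDeriv_fderiv, ← norm_iteratedFDeriv_fderiv, norm_iteratedFDeriv_zero]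

lemma comp_fst_bound {E : Type*} [NormedAddCommGroup E] [NormedSpace ℝ E]
    (g f : E → E) (hg : Differentiable ℝ g) (hf : Differentiable ℝ f)
    {A c : ℝ} (hA : ∀ y, ‖fderiv ℝ g y‖ ≤ A) (hc : ∀ y, ‖fderiv ℝ f y‖ ≤ c)
    (x : E) : ‖fderiv ℝ (fun y => g (f y)) x‖ ≤ A * c := by
  rw [show (fun y => g (f y)) = g ∘ f from rfl,
    fderiv_comp x (hg (f x)) (hf x)]
  calc ‖(fderiv ℝ g (f x)).comp (fderiv ℝ f x)‖
      ≤ ‖fderiv ℝ g (f x)‖ * ‖fderiv ℝ f x‖ := opNorm_comp_le _ _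
    _ ≤ A * c := by
        have hA0 : 0 ≤ A := le_trans (norm_nonneg _) (hA (f x))
        gcongr
        exacts [hA _, hc _]

lemma comp_snd_bound {E : Type*} [NormedAddCommGroup E] [NormedSpace ℝ E]
    (g f : E → E) (hg : ContDiff ℝ 2 g) (hf : ContDiff ℝ 2 f)
    {A B c d : ℝ}
    (hA : ∀ y, ‖fderiv ℝ g y‖ ≤ A) (hB : ∀ y, ‖iteratedFDeriv ℝ 2 g y‖ ≤ B)
    (hc : ∀ y, ‖fderiv ℝ f y‖ ≤ c) (hd : ∀ y, ‖iteratedFDeriv ℝ 2 f y‖ ≤ d)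
    (x : E) :
    ‖iteratedFDeriv ℝ 2 (fun y => g (f y)) x‖ ≤ B * c ^ 2 + A * d := by
  have hgd : Differentiable ℝ g := hg.differentiable two_ne_zero
  have hfd : Differentiable ℝ f := hf.differentiable two_ne_zero
  have hg1 : ContDiff ℝ 1 (fderiv ℝ g) := hg.fderiv_right (le_refl 2)
  have hf1 : ContDiff ℝ 1 (fderiv ℝ f) := hf.fderiv_right (le_refl 2)
  set u : E → (E →L[ℝ] E) := fun y => fderiv ℝ g (f y) with hu_def
  set v : E → (E →L[ℝ] E) := fun y => fderiv ℝ f y with hv_def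
  have hu : HasFDerivAt u ((fderiv ℝ (fderiv ℝ g) (f x)).comp (fderiv ℝ f x)) x :=
    ((hg1.differentiable one_ne_zero (f x)).hasFDerivAt).comp x (hfd x).hasFDerivAt
  have hv : HasFDerivAt v (fderiv ℝ (fderiv ℝ f) x) x :=
    (hf1.differentiable one_ne_zero x).hasFDerivAt
  have hφ : HasFDerivAt (fun y => (u y).comp (v y))
      ((compL ℝ E E E (u x)).comp (fderiv ℝ (fderiv ℝ f) x) +
        ((compL ℝ E E E).flip (v x)).comp
          ((fderiv ℝ (fderiv ℝ g) (f x)).comp (fderiv ℝ f x))) x :=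
    hu.clm_comp hv
  have heq : (fun y => (u y).comp (v y)) = fderiv ℝ (fun y => g (f y)) := by
    funext y
    rw [show (fun y => g (f y)) = g ∘ f from rfl,
      fderiv_comp y (hgd (f y)) (hfd y)]
  rw [heq] at hφ
  rw [norm_snd_deriv, hφ.fderiv]
  have hc0 : 0 ≤ c := le_trans (norm_nonneg _) (hc x)
  have hB0 : 0 ≤ B := le_trans (norm_nonneg _) (hB (f x))
  calc ‖_ + _‖ ≤ ‖(compL ℝ E E E (u x)).comp (fderiv ℝ (fderiv ℝ f) x)‖ +
        ‖((compL ℝ E E E).flip (v x)).comp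
          ((fderiv ℝ (fderiv ℝ g) (f x)).comp (fderiv ℝ f x))‖ := norm_add_le _ _
    _ ≤ ‖compL ℝ E E E (u x)‖ * ‖fderiv ℝ (fderiv ℝ f) x‖ +
        ‖(compL ℝ E E E).flip (v x)‖ *
          (‖fderiv ℝ (fderiv ℝ g) (f x)‖ * ‖fderiv ℝ f x‖) :=
      add_le_add (opNorm_comp_le _ _)
        (le_trans (opNorm_comp_le _ _) (by gcongr; exact opNorm_comp_le _ _))
    _ ≤ ‖u x‖ * ‖fderiv ℝ (fderiv ℝ f) x‖ + ‖v x‖ *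
          (‖fderiv ℝ (fderiv ℝ g) (f x)‖ * ‖fderiv ℝ f x‖) := by
        gcongr
        · exact opNorm_le_bound _ (norm_nonneg _) fun w => opNorm_comp_le _ _
        · exact opNorm_le_bound _ (norm_nonneg _) fun w => by
            simpa [mul_comm] using opNorm_comp_le w (v x)
    _ ≤ A * d + c * (B * c) := by
        have h1 : ‖fderiv ℝ (fderiv ℝ g) (f x)‖ ≤ B := by
          rw [← norm_snd_deriv]; exact hB (f x)
        have h2 : ‖fderiv ℝ (fderiv ℝ f) x‖ ≤ d := by
          rw [← norm_snd_deriv]; exact hd x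
        have hu1 : ‖u x‖ ≤ A := hA _
        have hv1 : ‖v x‖ ≤ c := hc _
        have h3 : ‖fderiv ℝ f x‖ ≤ c := hc _
        have hA0 : 0 ≤ A := le_trans (norm_nonneg _) hu1
        have hd0 : 0 ≤ d := le_trans (norm_nonneg _) h2
        gcongr
    _ = B * c ^ 2 + A * d := by ring

lemma ddim_aux
    {E : Type*} [NormedAddCommGroup E] [NormedSpace ℝ E]
    (F : ℕ → E → E) (ρ κ : ℕ → ℝ) : ∀ T : ℕ,
    (∀ t : ℕ, 1 ≤ t → t ≤ T → 0 ≤ ρ t) →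
    (∀ t : ℕ, 1 ≤ t → t ≤ T → ContDiff ℝ 2 (F t)) →
    (∀ t : ℕ, 1 ≤ t → t ≤ T → ∀ x : E, ‖fderiv ℝ (F t) x‖ ≤ ρ t) →
    (∀ t : ℕ, 1 ≤ t → t ≤ T → ∀ x : E, ‖iteratedFDeriv ℝ 2 (F t) x‖ ≤ κ t) →
    ContDiff ℝ 2 (ddimComp F T) ∧
    (∀ x : E, ‖fderiv ℝ (ddimComp F T) x‖ ≤ ∏ t ∈ Finset.Icc 1 T, ρ t) ∧
    (∀ x : E, ‖iteratedFDeriv ℝ 2 (ddimComp F T) x‖ ≤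
        ∑ t ∈ Finset.Icc 1 T,
          (∏ m ∈ Finset.Icc 1 (t - 1), ρ m) * κ t *
            (∏ s ∈ Finset.Icc (t + 1) T, ρ s) ^ 2) := by
  intro T
  induction T with
  | zero =>
    intro _ _ _ _
    refine ⟨contDiff_id, ?_, ?_⟩
    · intro x
      simp only [ddimComp, Finset.Icc_eq_empty (by omega : ¬ (1:ℕ) ≤ 0), Finset.prod_empty,
        fderiv_id]
      exact norm_id_le
    · intro x
      simp only [ddimComp, Finset.Icc_eq_empty (by omega : ¬ (1:ℕ) ≤ 0), Finset.sum_empty]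
      rw [norm_snd_deriv]
      have : fderiv ℝ (id : E → E) = fun _ => ContinuousLinearMap.id ℝ E :=
        funext fun y => fderiv_id
      rw [this, fderiv_fun_const]
      simp
  | succ T ih =>
    intro hρ hC2 hJ hH
    have h1T : (1:ℕ) ≤ T + 1 := Nat.succ_le_succ (Nat.zero_le T)
    obtain ⟨ihC, ihJ, ihH⟩ := ih
      (fun t h1 h2 => hρ t h1 (le_trans h2 (Nat.le_succ T)))
      (fun t h1 h2 => hC2 t h1 (le_trans h2 (Nat.le_succ T)))
      (fun t h1 h2 => hJ t h1 (le_trans h2 (Nat.le_succ T)))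
      (fun t h1 h2 => hH t h1 (le_trans h2 (Nat.le_succ T)))
    have hf2 : ContDiff ℝ 2 (F (T + 1)) := hC2 (T + 1) h1T le_rfl
    have hfJ : ∀ x, ‖fderiv ℝ (F (T + 1)) x‖ ≤ ρ (T + 1) := hJ (T + 1) h1T le_rfl
    have hfH : ∀ x, ‖iteratedFDeriv ℝ 2 (F (T + 1)) x‖ ≤ κ (T + 1) := hH (T + 1) h1T le_rfl
    have hcomp : ddimComp F (T + 1) = fun x => ddimComp F T (F (T + 1) x) := rfl
    refine ⟨?_, ?_, ?_⟩
    · rw [hcomp]; exact ihC.comp hf2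
    · intro x
      rw [hcomp, Finset.prod_Icc_succ_top h1T]
      exact comp_fst_bound _ _ (ihC.differentiable two_ne_zero)
        (hf2.differentiable two_ne_zero) ihJ hfJ x
    · intro x
      have key := comp_snd_bound _ _ ihC hf2 ihJ ihH hfJ hfH x
      rw [hcomp]
      refine le_trans key (le_of_eq ?_)
      rw [Finset.sum_Icc_succ_top h1T]
      have hlast : (∏ m ∈ Finset.Icc 1 (T + 1 - 1), ρ m) * κ (T + 1) *
          (∏ s ∈ Finset.Icc (T + 1 + 1) (T + 1), ρ s) ^ 2 =
          (∏ t ∈ Finset.Icc 1 T, ρ t) * κ (T + 1) := by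
        rw [Finset.Icc_eq_empty (by omega : ¬ T + 1 + 1 ≤ T + 1), Finset.prod_empty]
        simp
      rw [hlast]
      have hsum : ∑ t ∈ Finset.Icc 1 T,
          (∏ m ∈ Finset.Icc 1 (t - 1), ρ m) * κ t *
            (∏ s ∈ Finset.Icc (t + 1) (T + 1), ρ s) ^ 2 =
          (∑ t ∈ Finset.Icc 1 T,
            (∏ m ∈ Finset.Icc 1 (t - 1), ρ m) * κ t *
              (∏ s ∈ Finset.Icc (t + 1) T, ρ s) ^ 2) * ρ (T + 1) ^ 2 := by
        rw [Finset.sum_mul]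
        refine Finset.sum_congr rfl fun t ht => ?_
        have htT : t ≤ T := (Finset.mem_Icc.mp ht).2
        rw [Finset.prod_Icc_succ_top (by omega : t + 1 ≤ T + 1)]
        ring
      rw [hsum]

/-- Unrolled second-derivative bound along the deterministic sampling
trajectory: if each `C²` step `F t` (for `1 ≤ t ≤ T`) satisfies
`‖DF t (x)‖ ≤ ρ t` and `‖D²F t (x)‖ ≤ κ t`, then the composition
`G = F 1 ∘ ⋯ ∘ F T` satisfies
`‖D²G(x)‖ ≤ ∑_{t=1}^T (∏_{m=1}^{t-1} ρ m) · κ t · (∏_{s=t+1}^T ρ s)²`. -/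
theorem ddim_trajectory_second_derivative_bound
    {E : Type*} [NormedAddCommGroup E] [NormedSpace ℝ E] [CompleteSpace E]
    (T : ℕ) (F : ℕ → E → E) (ρ κ : ℕ → ℝ)
    (hρ : ∀ t : ℕ, 1 ≤ t → t ≤ T → 0 ≤ ρ t)
    (hκ : ∀ t : ℕ, 1 ≤ t → t ≤ T → 0 ≤ κ t)
    (hC2 : ∀ t : ℕ, 1 ≤ t → t ≤ T → ContDiff ℝ 2 (F t))
    (hJ : ∀ t : ℕ, 1 ≤ t → t ≤ T → ∀ x : E, ‖fderiv ℝ (F t) x‖ ≤ ρ t)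
    (hH : ∀ t : ℕ, 1 ≤ t → t ≤ T → ∀ x : E, ‖iteratedFDeriv ℝ 2 (F t) x‖ ≤ κ t) :
    ∀ x : E,
      ‖iteratedFDeriv ℝ 2 (ddimComp F T) x‖ ≤
        ∑ t ∈ Finset.Icc 1 T,
          (∏ m ∈ Finset.Icc 1 (t - 1), ρ m) * κ t *
            (∏ s ∈ Finset.Icc (t + 1) T, ρ s) ^ 2 :=
  (ddim_aux F ρ κ T hρ hC2 hJ hH).2.2
end
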